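/- For any h ∈ (0,1), the two integrals 4∫ₕ¹ dx/(√(x²−h²)·√(1−x²)) and 4∫₀¹ dx/(√(1−x²)·√(1−(1−h²)x²)) are equal. -/

import Mathlib

open Real Set MeasureTheory

theorem stmt_1 (h : ℝ) (hh : h ∈ Ioo (0:ℝ) 1) :
    4 * ∫ x in Ioo h 1, 1 / (Real.sqrt (x ^ 2 - h ^ 2) * Real.sqrt (1 - x ^ 2)) =
    4 * ∫ x in Ioo (0:ℝ) 1, 1 / (Real.sqrt (1 - x ^ 2) * Real.sqrt (1 - (1 - h ^ 2) * x ^ 2)) := by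
  obtain ⟨h0, h1⟩ := hh
  have hk2nn : (0:ℝ) < 1 - h ^ 2 := by nlinarith
  set k : ℝ := Real.sqrt (1 - h ^ 2) with hkdef
  have hk2 : k ^ 2 = 1 - h ^ 2 := Real.sq_sqrt hk2nn.le
  have hkpos : 0 < k := Real.sqrt_pos.2 hk2nn
  set f : ℝ → ℝ := fun x => 1 / (Real.sqrt (x ^ 2 - h ^ 2) * Real.sqrt (1 - x ^ 2)) with hf
  set φ : ℝ → ℝ := fun y => Real.sqrt (1 - k ^ 2 * y ^ 2) with hφ
  set φ' : ℝ → ℝ := fun y => -(k ^ 2 * y) / Real.sqrt (1 - k ^ 2 * y ^ 2) with hφ'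
  have hupos : ∀ y ∈ Ioo (0:ℝ) 1, 0 < 1 - k ^ 2 * y ^ 2 := by
    intro y hy
    have : k ^ 2 * y ^ 2 < 1 := by nlinarith [hy.1, hy.2, hk2]
    linarith
  have hderiv : ∀ y ∈ Ioo (0:ℝ) 1, HasDerivWithinAt φ (φ' y) (Ioo (0:ℝ) 1) y := by
    intro y hy
    have hu : HasDerivAt (fun y : ℝ => 1 - k ^ 2 * y ^ 2) (-(k ^ 2 * (2 * y))) y := by
      have := ((hasDerivAt_pow 2 y).const_mul (k ^ 2)).const_sub 1
      simpa using this
    have := hu.sqrt (ne_of_gt (hupos y hy))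
    refine (this.congr_deriv ?_).hasDerivWithinAt
    have h2 : Real.sqrt (1 - k ^ 2 * y ^ 2) ≠ 0 := ne_of_gt (Real.sqrt_pos.2 (hupos y hy))
    field_simp [hφ']
    simp only [hφ']
    field_simp
  have hinj : InjOn φ (Ioo (0:ℝ) 1) := by
    intro a ha b hb hab
    have h1 := hupos a ha
    have h2 := hupos b hb
    have : 1 - k ^ 2 * a ^ 2 = 1 - k ^ 2 * b ^ 2 := by
      have := congrArg (fun t => t ^ 2) hab
      simpa [hφ, Real.sq_sqrt h1.le, Real.sq_sqrt h2.le] using this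
    have ha2 : a ^ 2 = b ^ 2 := by
      have hk2' : k ^ 2 ≠ 0 := by positivity
      field_simp at this
      nlinarith [hkpos]
    nlinarith [ha.1, hb.1]
  have himg : φ '' Ioo (0:ℝ) 1 = Ioo h 1 := by
    ext x
    constructor
    · rintro ⟨y, hy, rfl⟩
      have hu := hupos y hy
      constructor
      · have hy2 : y ^ 2 < 1 := by nlinarith [hy.1, hy.2]
        have : h ^ 2 < 1 - k ^ 2 * y ^ 2 := by nlinarith [mul_lt_mul_of_pos_left hy2 (pow_pos hkpos 2), hk2]
        calc h = Real.sqrt (h ^ 2) := by rw [Real.sqrt_sq h0.le]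
          _ < Real.sqrt (1 - k ^ 2 * y ^ 2) := Real.sqrt_lt_sqrt (by positivity) this
      · have : 1 - k ^ 2 * y ^ 2 < 1 := by
          have := mul_pos (pow_pos hkpos 2) (pow_pos hy.1 2)
          linarith
        calc Real.sqrt (1 - k ^ 2 * y ^ 2) < Real.sqrt 1 := Real.sqrt_lt_sqrt hu.le this
          _ = 1 := Real.sqrt_one
    · rintro ⟨hx1, hx2⟩
      have hxpos : 0 < x := lt_trans h0 hx1
      refine ⟨Real.sqrt ((1 - x ^ 2) / k ^ 2), ⟨?_, ?_⟩, ?_⟩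
      · exact Real.sqrt_pos.2 (div_pos (by nlinarith) (by positivity))
      · have : (1 - x ^ 2) / k ^ 2 < 1 := by
          rw [div_lt_one (by positivity)]
          nlinarith
        calc Real.sqrt ((1 - x ^ 2) / k ^ 2) < Real.sqrt 1 := Real.sqrt_lt_sqrt (div_nonneg (by nlinarith) (by positivity)) this
          _ = 1 := Real.sqrt_one
      · have hnn : (0:ℝ) ≤ (1 - x ^ 2) / k ^ 2 := by
          apply div_nonneg _ (by positivity); nlinarith
        simp only [hφ]
        rw [Real.sq_sqrt hnn]
        have : 1 - k ^ 2 * ((1 - x ^ 2) / k ^ 2) = x ^ 2 := by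
          field_simp
          ring
        rw [this, Real.sqrt_sq hxpos.le]
  have key : ∫ x in Ioo h 1, f x = ∫ y in Ioo (0:ℝ) 1, |φ' y| • f (φ y) := by
    rw [← himg]
    exact integral_image_eq_integral_abs_deriv_smul measurableSet_Ioo hderiv hinj f
  have hcongr : ∀ y ∈ Ioo (0:ℝ) 1, |φ' y| • f (φ y)
      = 1 / (Real.sqrt (1 - y ^ 2) * Real.sqrt (1 - (1 - h ^ 2) * y ^ 2)) := by
    intro y hy
    have hu := hupos y hy
    have hy1 : 0 < 1 - y ^ 2 := by nlinarith [hy.1, hy.2]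
    have hsq : (φ y) ^ 2 = 1 - k ^ 2 * y ^ 2 := Real.sq_sqrt hu.le
    have e1 : Real.sqrt ((φ y) ^ 2 - h ^ 2) = k * Real.sqrt (1 - y ^ 2) := by
      rw [hsq]
      have : 1 - k ^ 2 * y ^ 2 - h ^ 2 = k ^ 2 * (1 - y ^ 2) := by rw [hk2]; ring
      rw [this, Real.sqrt_mul (by positivity), Real.sqrt_sq hkpos.le]
    have e2 : Real.sqrt (1 - (φ y) ^ 2) = k * y := by
      rw [hsq]
      have : 1 - (1 - k ^ 2 * y ^ 2) = (k * y) ^ 2 := by ring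
      rw [this, Real.sqrt_sq (mul_nonneg hkpos.le hy.1.le)]
    have habs : |φ' y| = k ^ 2 * y / Real.sqrt (1 - k ^ 2 * y ^ 2) := by
      simp only [hφ']
      rw [abs_div, abs_neg, abs_of_nonneg (mul_nonneg (by positivity) hy.1.le),
        abs_of_nonneg (Real.sqrt_nonneg _)]
    simp only [hf, smul_eq_mul, e1, e2, habs, ← hk2]
    have hs1 : Real.sqrt (1 - y ^ 2) ≠ 0 := ne_of_gt (Real.sqrt_pos.2 hy1)
    have hs2 : Real.sqrt (1 - k ^ 2 * y ^ 2) ≠ 0 := ne_of_gt (Real.sqrt_pos.2 hu)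
    have hyne : y ≠ 0 := ne_of_gt hy.1
    field_simp
  have : ∫ x in Ioo h 1, f x = ∫ y in Ioo (0:ℝ) 1,
      1 / (Real.sqrt (1 - y ^ 2) * Real.sqrt (1 - (1 - h ^ 2) * y ^ 2)) := by
    rw [key]
    exact setIntegral_congr_fun measurableSet_Ioo hcongr
  rw [this]
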